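/- arXiv:2507.08714 — 2 statements merged into one kernel-verified Lean document; each statement's English description precedes it below -/
import Mathlib

section
/- For g ≥ 2, any seed α ∈ 𝒜_g, indices i, j ≥ 0, and any β ∈ ℝ: (φ_i^{[j]}(β g^i)·φ_{i+1}^{[j]}(β g^{i+1}))^{1/2} ≤ g^{1 − γ_i^{[j]}(α)}, where φ_i^{[j]}(β) := |Σ_{0≤n<g} e(α_{i+j}(n) − βn)| and γ_i^{[j]}(α) := (2 log 2)/((g−1)g⁴(log g)²) Σ_{0≤m<n<g} ‖(g α_{i+j}(m) − α_{i+j+1}(m)) − (g α_{i+j}(n) − α_{i+j+1}(n))‖². -/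
/-- `e(t) = exp(2πit)`. -/
noncomputable def eC (t : ℝ) : ℂ := Complex.exp (2 * (Real.pi : ℂ) * Complex.I * (t : ℂ))

/-- `φ_i^{[j]}(β) = |Σ_{0≤n<g} e(α_{i+j}(n) − βn)|`. -/
noncomputable def phi (g : ℕ) (α : ℕ → ℕ → ℝ) (i j : ℕ) (β : ℝ) : ℝ :=
  ‖∑ n ∈ Finset.range g, eC (α (i + j) n - β * n)‖

/-- Distance from `x` to the nearest integer. -/
noncomputable def nint (x : ℝ) : ℝ := |x - round x|

/-- The quantity `γ_i^{[j]}(α)`. -/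
noncomputable def gam (g : ℕ) (α : ℕ → ℕ → ℝ) (i j : ℕ) : ℝ :=
  (2 * Real.log 2) / (((g : ℝ) - 1) * (g : ℝ) ^ 4 * (Real.log g) ^ 2) *
    ∑ n ∈ Finset.range g, ∑ m ∈ Finset.range n,
      nint (((g : ℝ) * α (i + j) m - α (i + j + 1) m) -
        ((g : ℝ) * α (i + j) n - α (i + j + 1) n)) ^ 2

open Real Finset

lemma nint_nonneg (x : ℝ) : 0 ≤ nint x := abs_nonneg _

lemma nint_le_int (x : ℝ) (k : ℤ) : nint x ≤ |x - k| := by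
  rcases eq_or_ne k (round x) with h | h
  · simp [nint, h]
  · have h1 : nint x ≤ 1 / 2 := abs_sub_round x
    have h2 : (1 : ℝ) ≤ |(round x : ℝ) - k| := by
      have : round x - k ≠ 0 := sub_ne_zero.2 (Ne.symm h)
      calc (1:ℝ) = ((1:ℤ):ℝ) := by norm_num
        _ ≤ ((|round x - k| : ℤ) : ℝ) := by exact_mod_cast Int.one_le_abs this
        _ = |(round x : ℝ) - k| := by push_cast [Int.cast_abs]; ring_nf
    have h3 : |(round x : ℝ) - k| ≤ |(round x : ℝ) - x| + |x - k| := abs_sub_le _ _ _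
    have h4 : |(round x : ℝ) - x| = nint x := by rw [abs_sub_comm]; rfl
    linarith

lemma nint_neg_le (x : ℝ) : nint (-x) ≤ nint x := by
  have := nint_le_int (-x) (-(round x))
  simpa [nint, ← abs_neg (x - round x)] using this.trans_eq (by push_cast; congr 1; ring)

lemma nint_neg (x : ℝ) : nint (-x) = nint x :=
  le_antisymm (nint_neg_le x) (by simpa using nint_neg_le (-x))

lemma nint_add_le (x y : ℝ) : nint (x + y) ≤ nint x + nint y := by
  calc nint (x + y) ≤ |x + y - ((round x + round y : ℤ) : ℝ)| := nint_le_int _ _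
    _ = |(x - round x) + (y - round y)| := by push_cast; ring_nf
    _ ≤ _ := abs_add_le _ _

lemma nint_sub_le (x y : ℝ) : nint (x - y) ≤ nint x + nint y := by
  rw [sub_eq_add_neg]
  exact (nint_add_le x (-y)).trans (by rw [nint_neg])

lemma nint_nat_mul_le (n : ℕ) (x : ℝ) : nint (n * x) ≤ n * nint x := by
  calc nint ((n:ℝ) * x) ≤ |(n:ℝ) * x - ((n * round x : ℤ):ℝ)| := nint_le_int _ _
    _ = (n:ℝ) * |x - round x| := by push_cast; rw [show (n:ℝ)*x - (n:ℝ)*(round x:ℝ) = (n:ℝ)*(x - round x) by ring, abs_mul, abs_of_nonneg (by positivity : (0:ℝ) ≤ (n:ℝ))]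
    _ = n * nint x := rfl

lemma cos_le_one_sub (t : ℝ) : Real.cos (2 * π * t) ≤ 1 - 8 * nint t ^ 2 := by
  set y : ℝ := t - round t with hy
  have hyle : |y| ≤ 1 / 2 := abs_sub_round t
  have h1 : Real.cos (2 * π * t) = Real.cos (2 * π * y) := by
    rw [show 2 * π * t = 2 * π * y + (round t) * (2 * π) by rw [hy]; ring,
      Real.cos_add_int_mul_two_pi]
  have h2 : Real.cos (2 * π * y) = 1 - 2 * Real.sin (π * y) ^ 2 := by
    have hc := Real.cos_two_mul (π * y)
    have hs := Real.sin_sq_add_cos_sq (π * y)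
    rw [show 2 * π * y = 2 * (π * y) by ring, hc]; nlinarith
  have h3 : 4 * y ^ 2 ≤ Real.sin (π * y) ^ 2 := by
    rcases le_or_gt 0 y with h0 | h0
    · have := Real.mul_le_sin (x := π * y) (by positivity)
        (by nlinarith [Real.pi_pos, abs_of_nonneg h0 ▸ hyle])
      have h2y : 2 * y ≤ Real.sin (π * y) := by
        rw [show 2 / π * (π * y) = 2 * y by field_simp] at this; exact this
      nlinarith
    · have hyle' : -y ≤ 1/2 := by rw [abs_of_neg h0] at hyle; linarith
      have := Real.mul_le_sin (x := π * (-y)) (by nlinarith [Real.pi_pos])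
        (by nlinarith [Real.pi_pos])
      have h2y : 2 * (-y) ≤ Real.sin (π * (-y)) := by
        rw [show 2 / π * (π * (-y)) = 2 * (-y) by field_simp] at this; exact this
      rw [show π * (-y) = -(π * y) by ring, Real.sin_neg] at h2y
      nlinarith
  have hnint : nint t ^ 2 = y ^ 2 := by rw [show nint t = |y| from rfl, sq_abs]
  rw [h1, h2, hnint]; nlinarith

lemma eC_mul_conj (s t : ℝ) : eC s * (starRingEnd ℂ) (eC t) = eC (s - t) := by
  unfold eC
  rw [← Complex.exp_conj, ← Complex.exp_add]
  congr 1
  have : (starRingEnd ℂ) (2 * (Real.pi : ℂ) * Complex.I * (t : ℂ)) = -(2 * (Real.pi : ℂ) * Complex.I * (t : ℂ)) := by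
    simp [map_mul, map_ofNat, Complex.conj_I, Complex.conj_ofReal]
  rw [this]; push_cast; ring

lemma eC_re (t : ℝ) : (eC t).re = Real.cos (2 * π * t) := by
  unfold eC
  rw [show 2 * (Real.pi : ℂ) * Complex.I * (t : ℂ) = ((2 * π * t : ℝ) : ℂ) * Complex.I by push_cast; ring,
    Complex.exp_ofReal_mul_I_re]

lemma abs_eC (t : ℝ) : ‖eC t‖ = 1 := by
  unfold eC
  rw [show 2 * (Real.pi : ℂ) * Complex.I * (t : ℂ) = ((2 * π * t : ℝ) : ℂ) * Complex.I by push_cast; ring,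
    Complex.norm_exp_ofReal_mul_I]

lemma abs_sum_eC_sq (g : ℕ) (x : ℕ → ℝ) :
    (‖∑ n ∈ range g, eC (x n)‖) ^ 2
      = ∑ m ∈ range g, ∑ n ∈ range g, Real.cos (2 * π * (x m - x n)) := by
  have h : ((∑ n ∈ range g, eC (x n)) * (starRingEnd ℂ) (∑ n ∈ range g, eC (x n))).re
      = ∑ m ∈ range g, ∑ n ∈ range g, Real.cos (2 * π * (x m - x n)) := by
    rw [map_sum, Finset.sum_mul_sum, Complex.re_sum]
    refine Finset.sum_congr rfl fun m _ => ?_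
    rw [Complex.re_sum]
    refine Finset.sum_congr rfl fun n _ => ?_
    rw [eC_mul_conj, eC_re]
  rw [Complex.sq_norm, ← h, Complex.mul_conj, Complex.ofReal_re]

lemma tri_le_sq {g : ℕ} (f : ℕ → ℕ → ℝ) (h0 : ∀ m n, 0 ≤ f m n) (hs : ∀ m n, f m n = f n m) :
    2 * ∑ n ∈ range g, ∑ m ∈ range n, f m n ≤ ∑ m ∈ range g, ∑ n ∈ range g, f m n := by
  induction g with
  | zero => simp
  | succ N ih =>
    have expand : ∑ m ∈ range (N + 1), ∑ n ∈ range (N + 1), f m n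
        = (∑ m ∈ range N, ∑ n ∈ range N, f m n) + 2 * (∑ m ∈ range N, f m N) + f N N := by
      rw [Finset.sum_range_succ]
      rw [Finset.sum_congr rfl (fun m _ => Finset.sum_range_succ (f m) N),
        Finset.sum_add_distrib, Finset.sum_range_succ (f N) N,
        Finset.sum_congr rfl (fun n _ => hs N n)]
      ring
    rw [Finset.sum_range_succ, expand]
    have := h0 N N
    linarith

lemma log_sub_nonneg_aux {g : ℕ} (hg : 2 ≤ g) {A : ℝ} (hA : 0 ≤ A) (hAg : A ≤ g) :
    0 ≤ Real.log g - Real.log A := by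
  rcases eq_or_lt_of_le hA with h0 | h0
  · rw [← h0, Real.log_zero, sub_zero]
    exact Real.log_nonneg (by exact_mod_cast Nat.one_le_of_lt hg)
  · exact sub_nonneg.2 (Real.log_le_log h0 hAg)

lemma sq_sub_le_log {g : ℕ} (hg : 2 ≤ g) {A : ℝ} (hA : 0 ≤ A) (hAg : A ≤ (g:ℝ)) :
    (g:ℝ) ^ 2 - A ^ 2 ≤ 2 * (g:ℝ) ^ 2 * (Real.log g - Real.log A) := by
  have h2R : (2:ℝ) ≤ g := by exact_mod_cast hg
  have hg0 : (0:ℝ) < g := by linarith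
  rcases eq_or_lt_of_le hA with h0 | h0
  · rw [← h0, Real.log_zero]
    have hlog2 : (0.6931471803:ℝ) < Real.log 2 := Real.log_two_gt_d9
    have hlogg : Real.log 2 ≤ Real.log g := Real.log_le_log two_pos (by exact_mod_cast hg)
    nlinarith [sq_nonneg (g:ℝ)]
  · have h1 : Real.exp (2 * (Real.log A - Real.log g)) = (A / g) ^ 2 := by
      rw [show 2 * (Real.log A - Real.log g) = (Real.log A - Real.log g) + (Real.log A - Real.log g) by ring,
        Real.exp_add, Real.exp_sub, Real.exp_log h0, Real.exp_log hg0]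
      ring
    have h2 : 2 * (Real.log A - Real.log g) + 1 ≤ (A / g) ^ 2 := by
      rw [← h1]; exact Real.add_one_le_exp _
    have h3 : (A / g) ^ 2 = A ^ 2 / (g:ℝ) ^ 2 := by ring
    rw [h3] at h2
    have h4 : (2 * (Real.log A - Real.log g) + 1) * (g:ℝ)^2 ≤ A ^ 2 := by
      rw [le_div_iff₀ (by positivity : (0:ℝ) < (g:ℝ)^2)] at h2
      exact h2
    nlinarith

lemma key_bound (g : ℕ) (x : ℕ → ℝ) :
    16 * ∑ n ∈ range g, ∑ m ∈ range n, nint (x m - x n) ^ 2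
      ≤ (g:ℝ) ^ 2 - (‖∑ n ∈ range g, eC (x n)‖) ^ 2 := by
  rw [abs_sum_eC_sq]
  have h1 : ∑ m ∈ range g, ∑ n ∈ range g, Real.cos (2 * π * (x m - x n))
      ≤ ∑ m ∈ range g, ∑ n ∈ range g, (1 - 8 * nint (x m - x n) ^ 2) :=
    Finset.sum_le_sum fun m _ => Finset.sum_le_sum fun n _ => cos_le_one_sub _
  have h2 : ∑ m ∈ range g, ∑ n ∈ range g, (1 - 8 * nint (x m - x n) ^ 2)
      = (g:ℝ) ^ 2 - 8 * ∑ m ∈ range g, ∑ n ∈ range g, nint (x m - x n) ^ 2 := by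
    rw [Finset.sum_congr rfl (fun m (_ : m ∈ range g) => Finset.sum_sub_distrib
      (f := fun _ => (1:ℝ)) (g := fun n => 8 * nint (x m - x n) ^ 2)), Finset.sum_sub_distrib]
    simp [Finset.mul_sum, Finset.sum_const, card_range]
    ring
  have h3 := tri_le_sq (g := g) (fun m n => nint (x m - x n) ^ 2)
      (fun m n => by positivity)
      (fun m n => by show nint (x m - x n) ^ 2 = nint (x n - x m) ^ 2; rw [show x m - x n = -(x n - x m) by ring, nint_neg])
  linarith

set_option maxHeartbeats 1000000 in
theorem consecutive_phi (g : ℕ) (hg : 2 ≤ g) (α : ℕ → ℕ → ℝ) (i j : ℕ) (β : ℝ) :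
    Real.sqrt (phi g α i j (β * (g : ℝ) ^ i) * phi g α (i + 1) j (β * (g : ℝ) ^ (i + 1))) ≤
      (g : ℝ) ^ (1 - gam g α i j) := by
  have h2R : (2:ℝ) ≤ g := by exact_mod_cast hg
  have hg0 : (0:ℝ) < g := by linarith
  set G : ℝ := ((g:ℕ) : ℝ) with hG
  set θ : ℝ := β * G ^ i with hθ
  set x : ℕ → ℝ := fun n => α (i + j) n - θ * n with hx
  set y : ℕ → ℝ := fun n => α (i + j + 1) n - θ * G * n with hy
  set A : ℝ := phi g α i j (β * G ^ i) with hA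
  set B : ℝ := phi g α (i + 1) j (β * G ^ (i + 1)) with hB
  have hAx : A = ‖∑ n ∈ range g, eC (x n)‖ := rfl
  have hBy : B = ‖∑ n ∈ range g, eC (y n)‖ := by
    rw [hB]; unfold phi
    congr 1
    refine Finset.sum_congr rfl fun n _ => ?_
    have hidx : i + 1 + j = i + j + 1 := by omega
    have hβ : β * G ^ (i + 1) = θ * G := by rw [hθ, pow_succ]; ring
    rw [hidx, hβ]
  have hAnn : 0 ≤ A := by rw [hAx]; exact norm_nonneg _
  have hBnn : 0 ≤ B := by rw [hBy]; exact norm_nonneg _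
  have hAle : A ≤ G := by
    rw [hAx]
    calc ‖∑ n ∈ range g, eC (x n)‖ ≤ ∑ n ∈ range g, ‖eC (x n)‖ :=
          norm_sum_le _ _
      _ = G := by simp [abs_eC, hG]
  have hBle : B ≤ G := by
    rw [hBy]
    calc ‖∑ n ∈ range g, eC (y n)‖ ≤ ∑ n ∈ range g, ‖eC (y n)‖ :=
          norm_sum_le _ _
      _ = G := by simp [abs_eC, hG]
  have hka : 16 * ∑ n ∈ range g, ∑ m ∈ range n, nint (x m - x n) ^ 2 ≤ G ^ 2 - A ^ 2 := by
    rw [hAx]; exact key_bound g x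
  have hkb : 16 * ∑ n ∈ range g, ∑ m ∈ range n, nint (y m - y n) ^ 2 ≤ G ^ 2 - B ^ 2 := by
    rw [hBy]; exact key_bound g y
  set Sa : ℝ := ∑ n ∈ range g, ∑ m ∈ range n, nint (x m - x n) ^ 2 with hSa
  set Sb : ℝ := ∑ n ∈ range g, ∑ m ∈ range n, nint (y m - y n) ^ 2 with hSb
  set Sd : ℝ := ∑ n ∈ range g, ∑ m ∈ range n,
      nint ((G * α (i + j) m - α (i + j + 1) m) - (G * α (i + j) n - α (i + j + 1) n)) ^ 2 with hSd
  have hpt : Sd ≤ 2 * G ^ 2 * Sa + 2 * Sb := by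
    rw [hSd, hSa, hSb]
    calc ∑ n ∈ range g, ∑ m ∈ range n,
          nint ((G * α (i + j) m - α (i + j + 1) m) - (G * α (i + j) n - α (i + j + 1) n)) ^ 2
        ≤ ∑ n ∈ range g, ∑ m ∈ range n,
            (2 * G ^ 2 * nint (x m - x n) ^ 2 + 2 * nint (y m - y n) ^ 2) := by
          refine Finset.sum_le_sum fun n _ => Finset.sum_le_sum fun m _ => ?_
          have hD : (G * α (i + j) m - α (i + j + 1) m) - (G * α (i + j) n - α (i + j + 1) n)
              = G * (x m - x n) - (y m - y n) := by rw [hx, hy]; ring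
          rw [hD]
          have h1 : nint (G * (x m - x n) - (y m - y n))
              ≤ G * nint (x m - x n) + nint (y m - y n) :=
            (nint_sub_le _ _).trans (by linarith [nint_nat_mul_le g (x m - x n)])
          nlinarith [nint_nonneg (G * (x m - x n) - (y m - y n)), nint_nonneg (x m - x n),
            nint_nonneg (y m - y n), sq_nonneg (G * nint (x m - x n) - nint (y m - y n))]
      _ = 2 * G ^ 2 * (∑ n ∈ range g, ∑ m ∈ range n, nint (x m - x n) ^ 2)
            + 2 * ∑ n ∈ range g, ∑ m ∈ range n, nint (y m - y n) ^ 2 := by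
          simp [Finset.sum_add_distrib, Finset.mul_sum]
  have hLa : G ^ 2 - A ^ 2 ≤ 2 * G ^ 2 * (Real.log G - Real.log A) := sq_sub_le_log hg hAnn hAle
  have hLb : G ^ 2 - B ^ 2 ≤ 2 * G ^ 2 * (Real.log G - Real.log B) := sq_sub_le_log hg hBnn hBle
  set P : ℝ := Real.log G - Real.log A with hP
  set Q : ℝ := Real.log G - Real.log B with hQ
  have hP0 : 0 ≤ P := log_sub_nonneg_aux hg hAnn hAle
  have hQ0 : 0 ≤ Q := log_sub_nonneg_aux hg hBnn hBle
  have hSd4 : Sd ≤ (G ^ 4 * P + G ^ 2 * Q) / 4 := by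
    have h1 : 16 * Sa ≤ 2 * G ^ 2 * P := le_trans hka hLa
    have h2 : 16 * Sb ≤ 2 * G ^ 2 * Q := le_trans hkb hLb
    have e1 : 2 * G ^ 2 * Sa ≤ G ^ 4 * P / 4 := by
      nlinarith [mul_le_mul_of_nonneg_left h1 (show (0:ℝ) ≤ G ^ 2 / 8 by positivity)]
    have e2 : 2 * Sb ≤ G ^ 2 * Q / 4 := by nlinarith [h2]
    linarith [hpt, e1, e2]
  have hL2 : Real.log 2 ≤ Real.log G := Real.log_le_log two_pos h2R
  have hL2pos : (0:ℝ) < Real.log 2 := Real.log_pos one_lt_two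
  have hLg : (0:ℝ) < Real.log G := lt_of_lt_of_le hL2pos hL2
  have hgam : gam g α i j = (2 * Real.log 2) / ((G - 1) * G ^ 4 * (Real.log G) ^ 2) * Sd := rfl
  have hG1 : (1:ℝ) ≤ G - 1 := by linarith
  clear_value Sd Sa Sb P Q x y A B θ G
  have hγ : gam g α i j * Real.log G ≤ (P + Q) / 2 := by
    rw [hgam]
    have hc : 0 ≤ (2 * Real.log 2) / ((G - 1) * G ^ 4 * (Real.log G) ^ 2) := by
      apply div_nonneg (by positivity)
      have : (0:ℝ) < G - 1 := by linarith
      positivity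
    have step1 : (2 * Real.log 2) / ((G - 1) * G ^ 4 * (Real.log G) ^ 2) * Sd * Real.log G
        ≤ (2 * Real.log 2) / ((G - 1) * G ^ 4 * (Real.log G) ^ 2) * ((G ^ 4 * P + G ^ 2 * Q) / 4) * Real.log G := by
      apply mul_le_mul_of_nonneg_right (mul_le_mul_of_nonneg_left hSd4 hc) (le_of_lt hLg)
    refine step1.trans ?_
    have hden : (0:ℝ) < (G - 1) * G ^ 4 * (Real.log G) ^ 2 := by
      have : (0:ℝ) < G - 1 := by linarith
      positivity
    rw [div_mul_eq_mul_div, div_mul_eq_mul_div, div_le_iff₀ hden]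
    have hkey : Real.log 2 ≤ (G - 1) * Real.log G := by nlinarith
    have hGm10 : (0:ℝ) < G - 1 := by linarith
    have e1 : Real.log 2 * (G ^ 4 * P) * Real.log G
        ≤ ((G - 1) * Real.log G) * (G ^ 4 * P) * Real.log G :=
      mul_le_mul_of_nonneg_right (mul_le_mul_of_nonneg_right hkey (by positivity)) (le_of_lt hLg)
    have e2 : Real.log 2 * (G ^ 2 * Q) * Real.log G
        ≤ ((G - 1) * Real.log G) * (G ^ 2 * Q) * Real.log G :=
      mul_le_mul_of_nonneg_right (mul_le_mul_of_nonneg_right hkey (by positivity)) (le_of_lt hLg)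
    have h1G : (1:ℝ) ≤ G := by linarith
    have hG24 : G ^ 2 ≤ G ^ 4 := by nlinarith [mul_le_mul_of_nonneg_left (mul_le_mul h1G h1G zero_le_one (by linarith : (0:ℝ) ≤ G)) (sq_nonneg G)]
    have e3 : ((G - 1) * Real.log G) * (G ^ 2 * Q) * Real.log G
        ≤ ((G - 1) * Real.log G) * (G ^ 4 * Q) * Real.log G := by
      apply mul_le_mul_of_nonneg_right _ (le_of_lt hLg)
      exact mul_le_mul_of_nonneg_left (mul_le_mul_of_nonneg_right hG24 hQ0) (by positivity)
    nlinarith [e1, e2, e3]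
  have hq2 : 2 * (gam g α i j * Real.log G) ≤ P + Q := by linarith
  have hr : ((G:ℝ) ^ ((1:ℝ) - gam g α i j)) ^ 2 = Real.exp ((2 - 2 * gam g α i j) * Real.log G) := by
    rw [← Real.rpow_natCast (G ^ ((1:ℝ) - gam g α i j)) 2, ← Real.rpow_mul (le_of_lt hg0),
      Real.rpow_def_of_pos hg0]
    norm_num
    ring_nf
  have hABle : A * B ≤ (G ^ ((1:ℝ) - gam g α i j)) ^ 2 := by
    rcases eq_or_lt_of_le hAnn with hA0 | hA0
    · rw [← hA0, zero_mul, hr]; positivity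
    rcases eq_or_lt_of_le hBnn with hB0 | hB0
    · rw [← hB0, mul_zero, hr]; positivity
    rw [hr, ← Real.exp_log (mul_pos hA0 hB0), Real.exp_le_exp,
      Real.log_mul (ne_of_gt hA0) (ne_of_gt hB0)]
    nlinarith [hq2]
  calc Real.sqrt (A * B) ≤ Real.sqrt ((G ^ ((1:ℝ) - gam g α i j)) ^ 2) := Real.sqrt_le_sqrt hABle
    _ = G ^ ((1:ℝ) - gam g α i j) := Real.sqrt_sq (Real.rpow_nonneg (le_of_lt hg0) _)
end

section
/- Let g ≥ 2, let r ∈ ℤ_{≥0}, and M, N, R ∈ ℝ_{≥1} with 0 ≤ r ≤ R and R ≤ N^{1/2}. Choose λ ∈ ℕ with g^{λ−1} ≤ MR² < g^λ and assume λ ≤ L. Then the set ℰ of pairs (m,n) ∈ ℕ² with M < m ≤ 2M, N < n ≤ 2N for which f_L(m(n+r)) − f_L(mn) ≠ f_λ(m(n+r)) − f_λ(mn) has cardinality #ℰ ≤ C_g·MN/R, where C_g depends only on g. (Here f_μ(x) := Σ_{0≤i<μ} α_i(ε_i(x)) for any seed α ∈ 𝒜_g, and the key point is that membership in ℰ forces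 an integer k with mn < k g^λ ≤ m(n+r).) -/
/-- The `i`-th base-`g` digit of `n`. -/
noncomputable def eps (g n i : ℕ) : ℕ := n / g ^ i % g

/-- The weakly digital function `f_μ` generated by the seed `α`. -/
noncomputable def wdf (g : ℕ) (α : ℕ → ℕ → ℝ) (μ n : ℕ) : ℝ :=
  ∑ i ∈ Finset.range μ, α i (eps g n i)

lemma wdf_sub (g : ℕ) (α : ℕ → ℕ → ℝ) {lam L : ℕ} (h : lam ≤ L) (n : ℕ) :
    wdf g α L n - wdf g α lam n = ∑ i ∈ Finset.Ico lam L, α i (eps g n i) := by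
  unfold wdf
  rw [Finset.range_eq_Ico,
    ← Finset.sum_Ico_consecutive (fun i => α i (eps g n i)) (Nat.zero_le lam) h, ← Finset.range_eq_Ico]
  ring

lemma eps_of_div_eq {g lam x y : ℕ} (h : x / g ^ lam = y / g ^ lam)
    {i : ℕ} (hi : lam ≤ i) : eps g x i = eps g y i := by
  unfold eps
  have hp : g ^ i = g ^ lam * g ^ (i - lam) := by
    rw [← pow_add, Nat.add_sub_cancel' hi]
  rw [hp, ← Nat.div_div_eq_div_mul, ← Nat.div_div_eq_div_mul, h]

lemma nat_lt_div_succ_mul (a b : ℕ) (hb : 0 < b) : a < (a / b + 1) * b := by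
  have h1 := Nat.mod_lt a hb
  have h2 := Nat.div_add_mod a b
  calc a = b * (a / b) + a % b := h2.symm
    _ < b * (a / b) + b := by omega
    _ = (a / b + 1) * b := by ring

set_option maxHeartbeats 1000000 in
theorem truncation (g : ℕ) (hg : 2 ≤ g) :
    ∃ C : ℝ, 0 < C ∧ ∀ (α : ℕ → ℕ → ℝ) (L : ℕ) (r : ℕ) (M N R : ℝ) (lam : ℕ),
      1 ≤ M → 1 ≤ N → 1 ≤ R → (r : ℝ) ≤ R → R ≤ Real.sqrt N →
      1 ≤ lam → (g : ℝ) ^ (lam - 1) ≤ M * R ^ 2 → M * R ^ 2 < (g : ℝ) ^ lam → lam ≤ L →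
      (Set.ncard {p : ℕ × ℕ | M < p.1 ∧ (p.1 : ℝ) ≤ 2 * M ∧ N < p.2 ∧ (p.2 : ℝ) ≤ 2 * N ∧
          wdf g α L (p.1 * (p.2 + r)) - wdf g α L (p.1 * p.2) ≠
            wdf g α lam (p.1 * (p.2 + r)) - wdf g α lam (p.1 * p.2)} : ℝ) ≤
        C * M * N / R := by
  refine ⟨2 * g + 10, by positivity, ?_⟩
  intro α L r M N R lam hM hN hR hrR hRN hlam1 hlow hhigh hlamL
  set G : ℕ := g ^ lam with hGdef
  have hG0 : 0 < G := Nat.pow_pos (by omega)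
  have hM0 : (0:ℝ) ≤ M := by linarith
  have hN0 : (0:ℝ) ≤ N := by linarith
  have hR0 : (0:ℝ) < R := by linarith
  set S : Set (ℕ × ℕ) := {p : ℕ × ℕ | M < p.1 ∧ (p.1 : ℝ) ≤ 2 * M ∧ N < p.2 ∧ (p.2 : ℝ) ≤ 2 * N ∧
          wdf g α L (p.1 * (p.2 + r)) - wdf g α L (p.1 * p.2) ≠
            wdf g α lam (p.1 * (p.2 + r)) - wdf g α lam (p.1 * p.2)} with hSdef
  -- key: for p ∈ S, the quotients by G differ
  have key : ∀ p ∈ S, p.1 * p.2 / G < p.1 * (p.2 + r) / G := by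
    intro p hp
    obtain ⟨-, -, -, -, hne⟩ := hp
    have hle : p.1 * p.2 / G ≤ p.1 * (p.2 + r) / G :=
      Nat.div_le_div_right (Nat.mul_le_mul_left _ (by omega))
    rcases lt_or_eq_of_le hle with h | h
    · exact h
    · exfalso
      apply hne
      have heps : ∀ i ∈ Finset.Ico lam L,
          α i (eps g (p.1 * (p.2 + r)) i) = α i (eps g (p.1 * p.2) i) := by
        intro i hi
        rw [eps_of_div_eq h.symm (Finset.mem_Ico.mp hi).1]
      have h1 := wdf_sub g α hlamL (p.1 * (p.2 + r))
      have h2 := wdf_sub g α hlamL (p.1 * p.2)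
      have h3 : ∑ i ∈ Finset.Ico lam L, α i (eps g (p.1 * (p.2 + r)) i)
          = ∑ i ∈ Finset.Ico lam L, α i (eps g (p.1 * p.2) i) :=
        Finset.sum_congr rfl heps
      linarith [h1, h2, h3]
  -- the counting finset
  set m1 : ℕ := ⌊2 * M⌋₊ with hm1def
  set n1 : ℕ := ⌊2 * N⌋₊ with hn1def
  set K0 : ℕ := ((⌊M⌋₊ + 1) * (⌊N⌋₊ + 1) - 1) / G with hK0def
  set K1 : ℕ := m1 * (n1 + r) / G with hK1def
  set T : Finset (ℕ × ℕ × ℕ) :=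
    Finset.Ioc ⌊M⌋₊ m1 ×ˢ Finset.Ioc K0 K1 ×ˢ Finset.range r with hTdef
  set F : ℕ × ℕ → ℕ × ℕ × ℕ := fun p =>
    (p.1, p.1 * (p.2 + r) / G, (p.1 * (p.2 + r) / G * G - 1) / p.1 - p.2) with hFdef
  -- basic facts about members of S
  have facts : ∀ p ∈ S, ⌊M⌋₊ < p.1 ∧ p.1 ≤ m1 ∧ ⌊N⌋₊ < p.2 ∧ p.2 ≤ n1 ∧
      p.2 ≤ (p.1 * (p.2 + r) / G * G - 1) / p.1 ∧
      (p.1 * (p.2 + r) / G * G - 1) / p.1 < p.2 + r ∧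
      K0 < p.1 * (p.2 + r) / G ∧ p.1 * (p.2 + r) / G ≤ K1 := by
    intro p hp
    have hdiv := key p hp
    obtain ⟨hpm, hpm2, hpn, hpn2, -⟩ := hp
    set m := p.1
    set n := p.2
    set k := m * (n + r) / G with hkdef
    have hm' : ⌊M⌋₊ < m := (Nat.floor_lt hM0).mpr hpm
    have hmle : m ≤ m1 := Nat.le_floor hpm2
    have hn' : ⌊N⌋₊ < n := (Nat.floor_lt hN0).mpr hpn
    have hnle : n ≤ n1 := Nat.le_floor hpn2
    have hmpos : 0 < m := by
      have h0 : (0:ℝ) < (m:ℝ) := lt_of_lt_of_le zero_lt_one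
        (le_of_lt (lt_of_le_of_lt hM hpm))
      exact_mod_cast h0
    have hnpos : 0 < n := by
      have h0 : (0:ℝ) < (n:ℝ) := lt_of_lt_of_le zero_lt_one
        (le_of_lt (lt_of_le_of_lt hN hpn))
      exact_mod_cast h0
    have hkG1 : k * G ≤ m * (n + r) := Nat.div_mul_le_self _ _
    have hkG2 : m * n < k * G := (Nat.div_lt_iff_lt_mul hG0).mp hdiv
    set q := (k * G - 1) / m with hqdef
    have hq1 : q * m ≤ k * G - 1 := Nat.div_mul_le_self _ _
    have hnq : n ≤ q := (Nat.le_div_iff_mul_le hmpos).mpr (by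
      have hnm : n * m = m * n := Nat.mul_comm n m
      omega)
    have hqnr : q < n + r := by
      have h6 : m * q < m * (n + r) := by
        have hqm : q * m = m * q := Nat.mul_comm q m
        omega
      exact Nat.lt_of_mul_lt_mul_left h6
    have hK0lt : K0 < k := by
      have hx : K0 * G ≤ (⌊M⌋₊ + 1) * (⌊N⌋₊ + 1) - 1 := Nat.div_mul_le_self _ _
      have hP1 : 1 ≤ (⌊M⌋₊ + 1) * (⌊N⌋₊ + 1) := Nat.one_le_iff_ne_zero.mpr (by positivity)
      have hmn : (⌊M⌋₊ + 1) * (⌊N⌋₊ + 1) ≤ m * n :=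
        Nat.mul_le_mul (by omega) (by omega)
      have hlt2 : K0 * G < k * G := by omega
      exact Nat.lt_of_mul_lt_mul_right hlt2
    have hK1le : k ≤ K1 := (Nat.le_div_iff_mul_le hG0).mpr
      (le_trans hkG1 (Nat.mul_le_mul hmle (by omega)))
    exact ⟨hm', hmle, hn', hnle, hnq, hqnr, hK0lt, hK1le⟩
  have hmaps : ∀ p ∈ S, F p ∈ (T : Set (ℕ × ℕ × ℕ)) := by
    intro p hp
    obtain ⟨h1, h2, h3, h4, h5, h6, h7, h8⟩ := facts p hp
    simp only [hTdef, hFdef, Finset.coe_product, Set.mem_prod, Finset.mem_coe,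
      Finset.mem_Ioc, Finset.mem_range]
    exact ⟨⟨h1, h2⟩, ⟨h7, h8⟩, by omega⟩
  have hinj : Set.InjOn F S := by
    intro p hp p' hp' heq
    obtain ⟨-, -, -, -, h5, h6, -, -⟩ := facts p hp
    obtain ⟨-, -, -, -, h5', h6', -, -⟩ := facts p' hp'
    simp only [hFdef, Prod.mk.injEq] at heq
    obtain ⟨e1, e2, e3⟩ := heq
    have e4 : (p.1 * (p.2 + r) / G * G - 1) / p.1 = (p'.1 * (p'.2 + r) / G * G - 1) / p'.1 := by
      rw [e2, e1]
    have h9 : p.2 = p'.2 := by omega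
    exact Prod.ext e1 h9
  have hcard : S.ncard ≤ T.card := by
    have := Set.ncard_le_ncard_of_injOn F hmaps hinj T.finite_toSet
    rwa [Set.ncard_coe_finset] at this
  have hTcard : T.card = (m1 - ⌊M⌋₊) * ((K1 - K0) * r) := by
    simp [hTdef, Finset.card_product, Nat.card_Ioc]
  -- real estimates
  have hsqrtN : R ^ 2 ≤ N := by
    have h := mul_le_mul hRN hRN (le_of_lt hR0) (Real.sqrt_nonneg N)
    rw [Real.mul_self_sqrt hN0] at h
    nlinarith
  have hRleN : R ≤ N := by nlinarith
  have hA : ((m1 - ⌊M⌋₊ : ℕ) : ℝ) ≤ 2 * M := by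
    have h1 : ((m1 - ⌊M⌋₊ : ℕ) : ℝ) ≤ (m1 : ℝ) := by
      exact_mod_cast Nat.sub_le _ _
    exact h1.trans (Nat.floor_le (by linarith))
  have hGcast : ((G : ℕ) : ℝ) = (g : ℝ) ^ lam := by push_cast [hGdef]; ring
  have hMG : M * R ^ 2 < (G : ℝ) := by rw [hGcast]; exact hhigh
  have hGM : (G : ℝ) ≤ g * (M * R ^ 2) := by
    rw [hGcast]
    have : (g : ℝ) ^ lam = (g : ℝ) ^ (lam - 1) * g := by
      rw [← pow_succ]
      congr 1
      omega
    rw [this]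
    have hgpos : (0:ℝ) ≤ g := by positivity
    nlinarith [hlow, hgpos]
  have hK : ((K1 - K0 : ℕ) : ℝ) * (M * R ^ 2) ≤ 3 * (M * N) + 2 * (M * R) + g * (M * R ^ 2) := by
    rcases le_or_gt K1 K0 with hle | hlt
    · have : K1 - K0 = 0 := by omega
      rw [this]
      push_cast
      have : (0:ℝ) ≤ g * (M * R ^ 2) := by positivity
      nlinarith
    · have hcastK : ((K1 - K0 : ℕ) : ℝ) = (K1 : ℝ) - K0 := by
        push_cast [Nat.cast_sub (le_of_lt hlt)]
        ring
      -- K1 * G ≤ 2M(2N+R)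
      have hK1G : (K1 : ℝ) * G ≤ 2 * M * (2 * N + R) := by
        have h1 : K1 * G ≤ m1 * (n1 + r) := Nat.div_mul_le_self _ _
        have h2 : ((K1 * G : ℕ) : ℝ) ≤ ((m1 * (n1 + r) : ℕ) : ℝ) := by exact_mod_cast h1
        push_cast at h2
        have hm1le : (m1 : ℝ) ≤ 2 * M := Nat.floor_le (by linarith)
        have hn1le : (n1 : ℝ) ≤ 2 * N := Nat.floor_le (by linarith)
        have : (m1 : ℝ) * ((n1 : ℝ) + r) ≤ 2 * M * (2 * N + R) := by
          apply mul_le_mul hm1le (by linarith) (by positivity) (by linarith)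
        linarith
      -- K0 * G ≥ M*N − G
      have hK0G : M * N - G ≤ (K0 : ℝ) * G := by
        set x := (⌊M⌋₊ + 1) * (⌊N⌋₊ + 1) - 1 with hxdef
        have h1 : x < (K0 + 1) * G := nat_lt_div_succ_mul x G hG0
        have hx1 : 1 ≤ (⌊M⌋₊ + 1) * (⌊N⌋₊ + 1) := Nat.one_le_iff_ne_zero.mpr (by positivity)
        have h1' : (⌊M⌋₊ + 1) * (⌊N⌋₊ + 1) ≤ (K0 + 1) * G := by omega
        have h2 : ((⌊M⌋₊ : ℝ) + 1) * ((⌊N⌋₊ : ℝ) + 1) ≤ ((K0 : ℝ) + 1) * G := by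
          exact_mod_cast h1'
        have hMm : M < (⌊M⌋₊ : ℝ) + 1 := Nat.lt_floor_add_one M
        have hNn : N < (⌊N⌋₊ : ℝ) + 1 := Nat.lt_floor_add_one N
        have hMN : M * N ≤ ((⌊M⌋₊ : ℝ) + 1) * ((⌊N⌋₊ : ℝ) + 1) := by
          apply mul_le_mul (le_of_lt hMm) (le_of_lt hNn) hN0 (by positivity)
        nlinarith
      have hG0' : (0:ℝ) < G := by exact_mod_cast hG0
      rw [hcastK]
      have hstep : ((K1 : ℝ) - K0) * G ≤ 3 * (M * N) + 2 * (M * R) + G := by nlinarith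
      have hKnn : (0:ℝ) ≤ (K1 : ℝ) - K0 := by
        have : (K0:ℝ) ≤ K1 := by exact_mod_cast le_of_lt hlt
        linarith
      have h7 : ((K1 : ℝ) - K0) * (M * R ^ 2) ≤ ((K1 : ℝ) - K0) * G :=
        mul_le_mul_of_nonneg_left (le_of_lt hMG) hKnn
      nlinarith [hGM]
  -- final chain
  rw [le_div_iff₀ hR0]
  have hchain : (S.ncard : ℝ) ≤ ((m1 - ⌊M⌋₊ : ℕ) : ℝ) * (((K1 - K0 : ℕ) : ℝ) * r) := by
    have h := hcard
    rw [hTcard] at h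
    have := (Nat.cast_le (α := ℝ)).mpr h
    push_cast at this
    push_cast
    linarith
  have hKnn : (0:ℝ) ≤ ((K1 - K0 : ℕ) : ℝ) := Nat.cast_nonneg _
  have hrnn : (0:ℝ) ≤ (r : ℝ) := Nat.cast_nonneg _
  have h1 : ((m1 - ⌊M⌋₊ : ℕ) : ℝ) * (((K1 - K0 : ℕ) : ℝ) * r) * R
      ≤ (2 * M) * (((K1 - K0 : ℕ) : ℝ) * R) * R := by
    have hKr : ((K1 - K0 : ℕ) : ℝ) * r ≤ ((K1 - K0 : ℕ) : ℝ) * R :=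
      mul_le_mul_of_nonneg_left hrR hKnn
    have hmain : ((m1 - ⌊M⌋₊ : ℕ) : ℝ) * (((K1 - K0 : ℕ) : ℝ) * r)
        ≤ (2 * M) * (((K1 - K0 : ℕ) : ℝ) * R) :=
      mul_le_mul hA hKr (by positivity) (by linarith)
    exact mul_le_mul_of_nonneg_right hmain (le_of_lt hR0)
  have h2 : (2 * M) * (((K1 - K0 : ℕ) : ℝ) * R) * R = 2 * (((K1 - K0 : ℕ) : ℝ) * (M * R ^ 2)) := by
    ring
  have h3 : ((K1 - K0 : ℕ) : ℝ) * (M * R ^ 2) ≤ (g + 5) * (M * N) := by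
    have e1 : 2 * (M * R) ≤ 2 * (M * N) := by nlinarith
    have e2 : (g:ℝ) * (M * R ^ 2) ≤ g * (M * N) := by gcongr
    nlinarith [hK]
  calc (S.ncard : ℝ) * R ≤ ((m1 - ⌊M⌋₊ : ℕ) : ℝ) * (((K1 - K0 : ℕ) : ℝ) * r) * R :=
        mul_le_mul_of_nonneg_right hchain (le_of_lt hR0)
    _ ≤ (2 * M) * (((K1 - K0 : ℕ) : ℝ) * R) * R := h1
    _ = 2 * (((K1 - K0 : ℕ) : ℝ) * (M * R ^ 2)) := h2
    _ ≤ 2 * ((g + 5) * (M * N)) := by linarith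
    _ = (2 * g + 10) * M * N := by ring
end
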